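/- (Proposition 3, strong law for tail segments.) Fix a segmentation R and rates μ ∈ Θ(R), fix w ∈ (0,1] and c > 0, and let g : ℕ → ℕ be a sequence with g(n) ≤ n for all n and g(n) > c·n^w for all sufficiently large n. Then almost surely (1/g(n))·Σ_{t=n−g(n)+1}^{n} l((R,μ); X_t) → L(R,μ) as n → ∞, and likewise (1/g(n))·Σ_{t=n−g(n)+1}^{n} ∇_μ l((R,μ); X_t) → ∇_μ L(R,μ) almost surely. -/

import Mathlib

open MeasureTheory ProbabilityTheory Filter Topology

/-- The reduced Poisson log-likelihood of a count array `x` under segmentation `R`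
and rates `μ`: `l((R,μ); x) = Σ_w Σ_i (x(i,w)·log μ(R i, w) − μ(R i, w))`. -/
noncomputable def loglik {NI NW m : ℕ} (R : Fin NI → Fin m)
    (μ : Fin m × Fin NW → ℝ) (x : Fin NI × Fin NW → ℕ) : ℝ :=
  ∑ w : Fin NW, ∑ i : Fin NI, ((x (i, w) : ℝ) * Real.log (μ (R i, w)) - μ (R i, w))

/-- Gradient of `l((R,μ); x)` in `μ`: its `(h,w)` entry is
`Σ_{i : R i = h} (x(i,w)/μ(h,w) − 1)`. -/
noncomputable def loglikGrad {NI NW m : ℕ} (R : Fin NI → Fin m)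
    (μ : Fin m × Fin NW → ℝ) (x : Fin NI × Fin NW → ℕ) :
    Fin m × Fin NW → ℝ :=
  fun hw => ∑ i : Fin NI,
    if R i = hw.1 then ((x (i, hw.2) : ℝ) / μ hw - 1) else 0

/-- Diagonal of the Hessian of `l((R,μ); x)` in `μ`: its `(h,w)` entry is
`−Σ_{i : R i = h} x(i,w)/μ(h,w)²`. -/
noncomputable def loglikHess {NI NW m : ℕ} (R : Fin NI → Fin m)
    (μ : Fin m × Fin NW → ℝ) (x : Fin NI × Fin NW → ℕ) :
    Fin m × Fin NW → ℝ :=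
  fun hw => -∑ i : Fin NI,
    if R i = hw.1 then (x (i, hw.2) : ℝ) / (μ hw) ^ 2 else 0

/-- The expected log-likelihood `L(R,μ)` when the true per-pixel rates are
`λ°(i,w) = μ°(R° i, w)`. -/
noncomputable def expLoglik {NI NW m0 m : ℕ} (R0 : Fin NI → Fin m0)
    (μ0 : Fin m0 × Fin NW → ℝ) (R : Fin NI → Fin m) (μ : Fin m × Fin NW → ℝ) : ℝ :=
  ∑ w : Fin NW, ∑ i : Fin NI, (μ0 (R0 i, w) * Real.log (μ (R i, w)) - μ (R i, w))

/-- Gradient of `L(R,μ)` in `μ`. -/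
noncomputable def expLoglikGrad {NI NW m0 m : ℕ} (R0 : Fin NI → Fin m0)
    (μ0 : Fin m0 × Fin NW → ℝ) (R : Fin NI → Fin m) (μ : Fin m × Fin NW → ℝ) :
    Fin m × Fin NW → ℝ :=
  fun hw => ∑ i : Fin NI,
    if R i = hw.1 then (μ0 (R0 i, hw.2) / μ hw - 1) else 0

/-- Diagonal of the Hessian of `L(R,μ)` in `μ`. -/
noncomputable def expLoglikHess {NI NW m0 m : ℕ} (R0 : Fin NI → Fin m0)
    (μ0 : Fin m0 × Fin NW → ℝ) (R : Fin NI → Fin m) (μ : Fin m × Fin NW → ℝ) :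
    Fin m × Fin NW → ℝ :=
  fun hw => -∑ i : Fin NI,
    if R i = hw.1 then μ0 (R0 i, hw.2) / (μ hw) ^ 2 else 0

/-- The compact parameter box `Θ(R) = [C_d, C_u]^(Fin m × Fin N_W)`. -/
def Theta (Cd Cu : ℝ) (m NW : ℕ) : Set (Fin m × Fin NW → ℝ) :=
  {μ | ∀ p, μ p ∈ Set.Icc Cd Cu}

open scoped NNReal ENNReal

section Prop3Aux

lemma exp_le_one_add_add (x : ℝ) : Real.exp x ≤ 1 + x + x ^ 2 * Real.exp |x| := by
  rcases le_or_gt 0 x with hx | hx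
  · rw [abs_of_nonneg hx]
    have h1 : (-x) + 1 ≤ Real.exp (-x) := Real.add_one_le_exp (-x)
    have h2 : Real.exp (-x) * Real.exp x = 1 := by
      rw [← Real.exp_add]; simp
    have h3 : 0 < Real.exp x := Real.exp_pos x
    nlinarith [mul_le_mul_of_nonneg_right h1 h3.le, sq_nonneg x, mul_pos h3 h3]
  · rw [abs_of_neg hx]
    have h1 : x + 1 ≤ Real.exp x := Real.add_one_le_exp x
    have h1' : (-x) + 1 ≤ Real.exp (-x) := Real.add_one_le_exp (-x)
    have h2 : Real.exp x * Real.exp (-x) = 1 := by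
      rw [← Real.exp_add]; simp
    have h3 : 0 < Real.exp (-x) := Real.exp_pos (-x)
    have h4 : 0 < Real.exp x := Real.exp_pos x
    nlinarith [mul_le_mul_of_nonneg_right h1' h3.le, sq_nonneg x, mul_pos h3 h3,
      mul_le_mul_of_nonneg_left h1' h3.le, sq_nonneg (x * Real.exp (-x)), sq_nonneg (1 + x)]

lemma sq_le_two_mul_exp_abs (x : ℝ) : x ^ 2 ≤ 2 * Real.exp |x| := by
  have h1 : |x| / 3 + 1 ≤ Real.exp (|x| / 3) := Real.add_one_le_exp _
  have h2 : Real.exp |x| = Real.exp (|x| / 3) ^ 3 := by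
    rw [← Real.exp_nat_mul]; ring_nf
  have h3 : (|x| / 3 + 1) ^ 3 ≤ Real.exp (|x| / 3) ^ 3 := by
    gcongr
  rw [h2]
  nlinarith [abs_nonneg x, sq_abs x, h3]

lemma poisson_singleton (r : ℝ≥0) (n : ℕ) :
    poissonMeasure r {n} = ENNReal.ofReal (poissonPMFReal r n) := by
  rw [poissonMeasure_singleton]
  rfl

lemma summable_exp_mul_poissonPMF (r : ℝ≥0) (u : ℝ) :
    Summable (fun n : ℕ => Real.exp (u * n) * poissonPMFReal r n) := by
  have h : ∀ n : ℕ, Real.exp (u * n) * poissonPMFReal r n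
      = Real.exp (-(r:ℝ)) * ((Real.exp u * r) ^ n / (n.factorial : ℝ)) := by
    intro n
    rw [poissonPMFReal, mul_pow, ← Real.exp_nat_mul]
    ring_nf
  rw [funext h]
  exact (Real.summable_pow_div_factorial _).mul_left _

lemma integrable_poisson_of_le_exp (r : ℝ≥0) {f : ℕ → ℝ} {C u : ℝ}
    (h : ∀ n : ℕ, ‖f n‖ ≤ C * Real.exp (u * n)) :
    Integrable f (poissonMeasure r) := by
  have hC : 0 ≤ C := by
    have := (norm_nonneg (f 0)).trans (h 0)
    nlinarith [Real.exp_pos (u * (0:ℕ))]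
  constructor
  · exact (measurable_of_countable f).aestronglyMeasurable
  · rw [hasFiniteIntegral_iff_norm]
    calc ∫⁻ a, ENNReal.ofReal ‖f a‖ ∂poissonMeasure r
        = ∑' n : ℕ, ENNReal.ofReal ‖f n‖ * poissonMeasure r {n} :=
          lintegral_countable' _
      _ ≤ ∑' n : ℕ, ENNReal.ofReal (C * Real.exp (u * n) * poissonPMFReal r n) := by
          refine ENNReal.tsum_le_tsum fun n => ?_
          rw [poisson_singleton, ← ENNReal.ofReal_mul (norm_nonneg _)]
          exact ENNReal.ofReal_le_ofReal
            (mul_le_mul_of_nonneg_right (h n) poissonPMFReal_nonneg)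
      _ < ⊤ := by
          rw [← ENNReal.ofReal_tsum_of_nonneg]
          · exact ENNReal.ofReal_lt_top
          · exact fun n => mul_nonneg (mul_nonneg hC (Real.exp_pos _).le) poissonPMFReal_nonneg
          · have := (summable_exp_mul_poissonPMF r u).mul_left C
            simpa [mul_assoc] using this

lemma integrable_exp_affine_poisson (r : ℝ≥0) (a b s : ℝ) :
    Integrable (fun x : ℕ => Real.exp (s * (a * x + b))) (poissonMeasure r) := by
  refine integrable_poisson_of_le_exp r (C := Real.exp (s * b)) (u := s * a) fun n => ?_
  rw [Real.norm_eq_abs, abs_of_pos (Real.exp_pos _), ← Real.exp_add]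
  apply le_of_eq
  ring_nf

lemma integrable_affine_poisson (r : ℝ≥0) (a b : ℝ) :
    Integrable (fun x : ℕ => a * x + b) (poissonMeasure r) := by
  refine integrable_poisson_of_le_exp r (C := |a| + |b|) (u := 1) fun n => ?_
  have h1 : ‖a * n + b‖ ≤ |a| * n + |b| := by
    calc ‖a * n + b‖ ≤ |a * n| + |b| := abs_add_le _ _
    _ = |a| * n + |b| := by rw [abs_mul, Nat.abs_cast]
  refine h1.trans ?_
  have h2 : (n : ℝ) ≤ Real.exp (1 * n) := by
    rw [one_mul]
    exact (Real.add_one_le_exp (n:ℝ)).trans' (by linarith)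
  have h3 : (1:ℝ) ≤ Real.exp (1 * n) := by
    rw [one_mul]
    exact Real.one_le_exp (by positivity)
  nlinarith [abs_nonneg a, abs_nonneg b, Nat.cast_nonneg (α := ℝ) n]

lemma hasSum_poisson_mean (r : ℝ≥0) :
    HasSum (fun n : ℕ => poissonPMFReal r n * n) (r : ℝ) := by
  rw [← hasSum_nat_add_iff' 1]
  simp only [Finset.range_one, Finset.sum_singleton, Nat.cast_zero, mul_zero, sub_zero]
  have h : (fun n : ℕ => poissonPMFReal r (n + 1) * ((n + 1 : ℕ) : ℝ))
      = fun n : ℕ => (r : ℝ) * poissonPMFReal r n := by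
    funext n
    rw [poissonPMFReal, poissonPMFReal, Nat.factorial_succ, pow_succ]
    push_cast
    field_simp
  rw [h]
  simpa [poissonPMFReal] using (poissonPMFRealSum r).mul_left (r : ℝ)

lemma integral_poisson_id (r : ℝ≥0) :
    ∫ x : ℕ, (x : ℝ) ∂poissonMeasure r = (r : ℝ) := by
  have hint : Integrable (fun x : ℕ => (x : ℝ)) (poissonMeasure r) := by
    simpa using integrable_affine_poisson r 1 0
  rw [integral_poissonMeasure' hint]
  have h : ∀ n : ℕ, (Real.exp (-(r:ℝ)) * (r:ℝ) ^ n / (n.factorial : ℝ)) • (n : ℝ)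
      = poissonPMFReal r n * n := by
    intro n
    rw [smul_eq_mul]
    rfl
  rw [funext h]
  exact (hasSum_poisson_mean r).tsum_eq

lemma integral_affine_poisson (r : ℝ≥0) (a b : ℝ) :
    ∫ x : ℕ, (a * x + b) ∂poissonMeasure r = a * r + b := by
  have h1 : Integrable (fun x : ℕ => a * (x : ℝ)) (poissonMeasure r) := by
    simpa using integrable_affine_poisson r a 0
  rw [integral_add h1 (integrable_const b), integral_const]
  have : IsProbabilityMeasure (poissonMeasure r) := inferInstance
  rw [integral_const_mul, integral_poisson_id]
  simp

lemma pois_mgf_bound (r : ℝ≥0) (a b : ℝ) :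
    ∃ K : ℝ, 0 ≤ K ∧ ∀ s : ℝ, |s| ≤ 1 →
      ∫ x : ℕ, Real.exp (s * (a * x + b)) ∂poissonMeasure r
        ≤ Real.exp (s * (a * r + b) + s ^ 2 * K) := by
  set ν := poissonMeasure r
  have hP : IsProbabilityMeasure ν := inferInstance
  set I2 : ℝ := ∫ x : ℕ, Real.exp (2 * (a * x + b)) ∂ν with hI2
  set I2' : ℝ := ∫ x : ℕ, Real.exp ((-2) * (a * x + b)) ∂ν with hI2'
  refine ⟨2 * (I2 + I2'), ?_, ?_⟩
  · have h2 : 0 ≤ I2 := integral_nonneg fun x => (Real.exp_pos _).le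
    have h2' : 0 ≤ I2' := integral_nonneg fun x => (Real.exp_pos _).le
    linarith
  intro s hs
  have hptwise : ∀ x : ℕ, Real.exp (s * (a * x + b)) ≤
      1 + s * (a * x + b) + s ^ 2 * (2 * (Real.exp (2 * (a * x + b)) +
        Real.exp ((-2) * (a * x + b)))) := by
    intro x
    set W : ℝ := a * x + b with hW
    have h1 := exp_le_one_add_add (s * W)
    have h2 : (s * W) ^ 2 * Real.exp |s * W| ≤ s ^ 2 * (2 * (Real.exp (2 * W) +
        Real.exp ((-2) * W))) := by
      have hsW : |s * W| ≤ |W| := by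
        rw [abs_mul]
        calc |s| * |W| ≤ 1 * |W| := by gcongr
        _ = |W| := one_mul _
      have h3 : Real.exp |s * W| ≤ Real.exp |W| := Real.exp_le_exp.2 hsW
      have h4 : W ^ 2 ≤ 2 * Real.exp |W| := sq_le_two_mul_exp_abs W
      have h5 : Real.exp |W| * Real.exp |W| = Real.exp (2 * |W|) := by
        rw [← Real.exp_add]; ring_nf
      have h6 : Real.exp (2 * |W|) ≤ Real.exp (2 * W) + Real.exp ((-2) * W) := by
        rcases le_or_gt 0 W with h | h
        · rw [abs_of_nonneg h]
          nlinarith [Real.exp_pos ((-2) * W)]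
        · rw [abs_of_neg h]
          have he : 2 * -W = (-2) * W := by ring
          rw [he]
          nlinarith [Real.exp_pos (2 * W)]
      have h7 : (s * W) ^ 2 * Real.exp |s * W| ≤ s ^ 2 * (W ^ 2 * Real.exp |W|) := by
        rw [mul_pow]
        rw [mul_assoc]
        gcongr
      refine h7.trans (mul_le_mul_of_nonneg_left ?_ (sq_nonneg s))
      calc W ^ 2 * Real.exp |W| ≤ 2 * Real.exp |W| * Real.exp |W| := by
            gcongr
        _ = 2 * Real.exp (2 * |W|) := by rw [mul_assoc, h5]
        _ ≤ 2 * (Real.exp (2 * W) + Real.exp ((-2) * W)) := by gcongr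
    linarith
  have hLint : Integrable (fun x : ℕ => Real.exp (s * (a * x + b))) ν :=
    integrable_exp_affine_poisson r a b s
  have hA : Integrable (fun x : ℕ => 1 + s * (a * x + b)) ν :=
    (integrable_const 1).add ((integrable_affine_poisson r a b).const_mul s)
  have hC : Integrable (fun x : ℕ => Real.exp (2 * (a * x + b)) +
      Real.exp ((-2) * (a * x + b))) ν :=
    (integrable_exp_affine_poisson r a b 2).add (integrable_exp_affine_poisson r a b (-2))
  have hB : Integrable (fun x : ℕ =>
      s ^ 2 * (2 * (Real.exp (2 * (a * x + b)) + Real.exp ((-2) * (a * x + b))))) ν :=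
    (hC.const_mul 2).const_mul (s ^ 2)
  have hRint : Integrable (fun x : ℕ => 1 + s * (a * x + b) +
      s ^ 2 * (2 * (Real.exp (2 * (a * x + b)) + Real.exp ((-2) * (a * x + b))))) ν :=
    hA.add hB
  have hmono := integral_mono hLint hRint hptwise
  have hval : ∫ x : ℕ, (1 + s * (a * x + b) +
      s ^ 2 * (2 * (Real.exp (2 * (a * x + b)) + Real.exp ((-2) * (a * x + b))))) ∂ν
      = 1 + s * (a * r + b) + s ^ 2 * (2 * (I2 + I2')) := by
    rw [integral_add hA hB,
      integral_add (integrable_const 1) ((integrable_affine_poisson r a b).const_mul s),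
      integral_const, integral_const_mul, integral_affine_poisson, integral_const_mul,
      integral_const_mul,
      integral_add (integrable_exp_affine_poisson r a b 2)
        (integrable_exp_affine_poisson r a b (-2))]
    simp [hI2, hI2', ν]
  rw [hval] at hmono
  refine hmono.trans ?_
  have := Real.add_one_le_exp (s * (a * r + b) + s ^ 2 * (2 * (I2 + I2')))
  linarith

lemma summable_exp_neg_mul_rpow {d w : ℝ} (hd : 0 < d) (hw : 0 < w) :
    Summable fun n : ℕ => Real.exp (-(d * (n : ℝ) ^ w)) := by
  have hsum : Summable fun n : ℕ => ((n : ℝ) ^ 2)⁻¹ := by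
    rw [Real.summable_nat_pow_inv]
    norm_num
  apply summable_of_isBigO_nat hsum
  rw [Asymptotics.isBigO_iff]
  refine ⟨1, ?_⟩
  have hlog : ∀ᶠ x : ℝ in atTop, ‖Real.log x‖ ≤ (d / 2) * ‖x ^ w‖ :=
    (isLittleO_log_rpow_atTop hw).def (by positivity)
  have hcast := (tendsto_natCast_atTop_atTop (R := ℝ)).eventually hlog
  filter_upwards [hcast, eventually_ge_atTop 1] with n hn hn1
  have hn1' : (1 : ℝ) ≤ (n : ℝ) := by exact_mod_cast hn1
  have hnpos : (0 : ℝ) < n := by linarith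
  have hlogn : Real.log n ≤ (d / 2) * (n : ℝ) ^ w := by
    have h1 : ‖Real.log (n : ℝ)‖ = Real.log n := by
      rw [Real.norm_eq_abs, abs_of_nonneg (Real.log_nonneg hn1')]
    have h2 : ‖(n : ℝ) ^ w‖ = (n : ℝ) ^ w := by
      rw [Real.norm_eq_abs, abs_of_nonneg (Real.rpow_nonneg hnpos.le _)]
    simpa [Function.comp, h1, h2] using hn
  have hkey : (n : ℝ) ^ 2 ≤ Real.exp (d * (n : ℝ) ^ w) := by
    have h3 : (n : ℝ) ^ 2 = Real.exp (2 * Real.log n) := by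
      rw [two_mul, Real.exp_add, Real.exp_log hnpos, sq]
    rw [h3]
    apply Real.exp_le_exp.2
    linarith
  rw [Real.norm_eq_abs, abs_of_pos (Real.exp_pos _), Real.exp_neg, one_mul,
    Real.norm_eq_abs, abs_of_pos (by positivity : (0:ℝ) < ((n:ℝ) ^ 2)⁻¹)]
  exact inv_anti₀ (by positivity) hkey

lemma chernoff_side {P : Type*} [Fintype P] {Ω : Type*} [MeasurableSpace Ω]
    (Pr : Measure Ω) [IsProbabilityMeasure Pr]
    (X : ℕ → Ω → P → ℕ) (lam : P → ℝ≥0)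
    (hmeas : ∀ t p, Measurable fun ω => X t ω p)
    (hindep : iIndepFun (fun (q : ℕ × P) ω => X q.1 ω q.2) Pr)
    (hlaw : ∀ t p, Measure.map (fun ω => X t ω p) Pr = poissonMeasure (lam p))
    (a b : P → ℝ) {ε : ℝ} (hε : 0 < ε) :
    ∃ β : ℝ, 0 < β ∧ ∀ m n : ℕ,
      (Pr {ω | ((∑ p, (a p * lam p + b p)) + ε) * ((n - m : ℕ) : ℝ) ≤
          ∑ t ∈ Finset.Ioc m n, ∑ p, (a p * (X t ω p : ℝ) + b p)}).toReal
        ≤ Real.exp (-β) ^ (n - m : ℕ) := by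
  classical
  set L : ℝ := ∑ p, (a p * lam p + b p) with hL
  choose K hK0 hKb using fun p => pois_mgf_bound (lam p) (a p) (b p)
  set KT : ℝ := ∑ p, K p with hKT
  have hKT0 : 0 ≤ KT := Finset.sum_nonneg fun p _ => hK0 p
  set s : ℝ := min 1 (ε / (2 * (KT + 1))) with hs
  have hs0 : 0 < s := lt_min one_pos (by positivity)
  have hs1 : s ≤ 1 := min_le_left _ _
  have hsabs : |s| ≤ 1 := by rw [abs_of_pos hs0]; exact hs1
  have hsK : s * KT ≤ ε / 2 := by
    have h1 : s ≤ ε / (2 * (KT + 1)) := min_le_right _ _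
    have h2 : s * KT ≤ (ε / (2 * (KT + 1))) * KT := by gcongr
    refine h2.trans ?_
    rw [div_mul_eq_mul_div, div_le_iff₀ (by positivity)]
    nlinarith
  refine ⟨s * ε / 2, by positivity, fun m n => ?_⟩
  set G : Finset ℕ := Finset.Ioc m n with hG
  have hcard : G.card = n - m := Nat.card_Ioc m n
  set Y : ℕ × P → Ω → ℝ := fun q ω => a q.2 * (X q.1 ω q.2 : ℝ) + b q.2 with hY
  have hYindep : iIndepFun Y Pr := by
    have := hindep.comp (fun q (x : ℕ) => a q.2 * (x : ℝ) + b q.2)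
      (fun q => measurable_of_countable _)
    exact this
  have hYmeas : ∀ q, Measurable (Y q) := fun q =>
    (measurable_of_countable (fun x : ℕ => a q.2 * (x : ℝ) + b q.2)).comp (hmeas q.1 q.2)
  have hYint : ∀ (s' : ℝ) q, Integrable (fun ω => Real.exp (s' * Y q ω)) Pr := by
    intro s' q
    have hg : AEStronglyMeasurable (fun x : ℕ => Real.exp (s' * (a q.2 * x + b q.2)))
        (Measure.map (fun ω => X q.1 ω q.2) Pr) :=
      (measurable_of_countable _).aestronglyMeasurable
    have := (integrable_map_measure hg (hmeas q.1 q.2).aemeasurable).mp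
      (by rw [hlaw q.1 q.2]; exact integrable_exp_affine_poisson (lam q.2) (a q.2) (b q.2) s')
    exact this
  have hmgfY : ∀ q : ℕ × P, mgf (Y q) Pr s
      = ∫ x : ℕ, Real.exp (s * (a q.2 * x + b q.2)) ∂poissonMeasure (lam q.2) := by
    intro q
    rw [mgf, ← hlaw q.1 q.2, integral_map (hmeas q.1 q.2).aemeasurable
      (measurable_of_countable _).aestronglyMeasurable]
  set SF : Ω → ℝ := ∑ q ∈ G ×ˢ Finset.univ, Y q with hSF
  have hSFval : ∀ ω, SF ω = ∑ t ∈ G, ∑ p, (a p * (X t ω p : ℝ) + b p) := by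
    intro ω
    rw [hSF, Finset.sum_apply, Finset.sum_product]
  have hint_sum : Integrable (fun ω => Real.exp (s * SF ω)) Pr :=
    hYindep.integrable_exp_mul_sum hYmeas (fun q _ => hYint s q)
  have hch := measure_ge_le_exp_mul_mgf (μ := Pr) (X := SF) (t := s)
    ((L + ε) * ((n - m : ℕ) : ℝ)) hs0.le hint_sum
  have hev : {ω | (L + ε) * ((n - m : ℕ) : ℝ) ≤
      ∑ t ∈ Finset.Ioc m n, ∑ p, (a p * (X t ω p : ℝ) + b p)}
      = {ω | (L + ε) * ((n - m : ℕ) : ℝ) ≤ SF ω} := by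
    ext ω; simp [hSFval ω, hG]
  rw [hev]
  refine hch.trans ?_
  have hmgfprod : mgf SF Pr s = (∏ p : P, mgf (Y (0, p)) Pr s) ^ (n - m) := by
    rw [hSF, hYindep.mgf_sum hYmeas, Finset.prod_product]
    have hfac : ∀ t p, mgf (Y (t, p)) Pr s = mgf (Y (0, p)) Pr s := by
      intro t p; rw [hmgfY, hmgfY]
    calc ∏ t ∈ G, ∏ p : P, mgf (Y (t, p)) Pr s
        = ∏ t ∈ G, ∏ p : P, mgf (Y (0, p)) Pr s := by
          refine Finset.prod_congr rfl fun t _ => Finset.prod_congr rfl fun p _ => hfac t p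
      _ = (∏ p : P, mgf (Y (0, p)) Pr s) ^ G.card := Finset.prod_const _
      _ = _ := by rw [hcard]
  have hMbound : ∏ p : P, mgf (Y (0, p)) Pr s ≤ Real.exp (s * L + s ^ 2 * KT) := by
    have h1 : ∀ p : P, mgf (Y (0, p)) Pr s
        ≤ Real.exp (s * (a p * lam p + b p) + s ^ 2 * K p) := by
      intro p
      rw [hmgfY]
      exact hKb p s hsabs
    calc ∏ p : P, mgf (Y (0, p)) Pr s
        ≤ ∏ p : P, Real.exp (s * (a p * lam p + b p) + s ^ 2 * K p) :=
          Finset.prod_le_prod (fun p _ => mgf_nonneg) (fun p _ => h1 p)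
      _ = Real.exp (∑ p, (s * (a p * lam p + b p) + s ^ 2 * K p)) :=
          (Real.exp_sum _ _).symm
      _ = Real.exp (s * L + s ^ 2 * KT) := by
          rw [Finset.sum_add_distrib, ← Finset.mul_sum, ← Finset.mul_sum, ← hL, ← hKT]
  have hexp1 : Real.exp (-s * ((L + ε) * ((n - m : ℕ) : ℝ)))
      = Real.exp (-s * (L + ε)) ^ (n - m) := by
    rw [← Real.exp_nat_mul]
    ring_nf
  calc Real.exp (-s * ((L + ε) * ((n - m : ℕ) : ℝ))) * mgf SF Pr s
      ≤ Real.exp (-s * ((L + ε) * ((n - m : ℕ) : ℝ)))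
        * Real.exp (s * L + s ^ 2 * KT) ^ (n - m) := by
        rw [hmgfprod]
        refine mul_le_mul_of_nonneg_left ?_ (Real.exp_pos _).le
        exact pow_le_pow_left₀ (Finset.prod_nonneg fun p _ => mgf_nonneg) hMbound _
    _ = (Real.exp (-s * (L + ε)) * Real.exp (s * L + s ^ 2 * KT)) ^ (n - m) := by
        rw [hexp1, mul_pow]
    _ = Real.exp (s ^ 2 * KT - s * ε) ^ (n - m) := by
        rw [← Real.exp_add]
        ring_nf
    _ ≤ Real.exp (-(s * ε / 2)) ^ (n - m) := by
        apply pow_le_pow_left₀ (Real.exp_pos _).le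
        apply Real.exp_le_exp.2
        nlinarith

lemma summable_bound {β c wexp : ℝ} (hβ : 0 < β) (hc : 0 < c) (hw : 0 < wexp)
    (g : ℕ → ℕ) (hg_gt : ∀ᶠ n : ℕ in atTop, c * (n : ℝ) ^ wexp < (g n : ℝ)) :
    Summable fun n : ℕ => Real.exp (-β) ^ (g n) := by
  apply summable_of_isBigO_nat (summable_exp_neg_mul_rpow
    (mul_pos hβ hc) hw)
  rw [Asymptotics.isBigO_iff]
  refine ⟨1, ?_⟩
  filter_upwards [hg_gt] with n hn
  rw [one_mul, Real.norm_eq_abs, Real.norm_eq_abs, ← Real.exp_nat_mul,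
    abs_of_pos (Real.exp_pos _), abs_of_pos (Real.exp_pos _)]
  apply Real.exp_le_exp.2
  have h1 : β * (c * (n : ℝ) ^ wexp) ≤ β * (g n : ℝ) := by
    have h2 : (0:ℝ) ≤ c * (n : ℝ) ^ wexp := by positivity
    nlinarith
  nlinarith

lemma bc_side {P : Type*} [Fintype P] {Ω : Type*} [MeasurableSpace Ω]
    (Pr : Measure Ω) [IsProbabilityMeasure Pr]
    (X : ℕ → Ω → P → ℕ) (lam : P → ℝ≥0)
    (hmeas : ∀ t p, Measurable fun ω => X t ω p)
    (hindep : iIndepFun (fun (q : ℕ × P) ω => X q.1 ω q.2) Pr)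
    (hlaw : ∀ t p, Measure.map (fun ω => X t ω p) Pr = poissonMeasure (lam p))
    (a b : P → ℝ) {wexp c : ℝ} (hw : 0 < wexp) (hc : 0 < c)
    (g : ℕ → ℕ) (hg_le : ∀ n, g n ≤ n)
    (hg_gt : ∀ᶠ n : ℕ in atTop, c * (n : ℝ) ^ wexp < (g n : ℝ))
    {δ : ℝ} (hδ : 0 < δ) :
    ∀ᵐ ω ∂Pr, ∀ᶠ n : ℕ in atTop,
      ∑ t ∈ Finset.Ioc (n - g n) n, ∑ p, (a p * (X t ω p : ℝ) + b p)
        < ((∑ p, (a p * lam p + b p)) + δ) * (g n : ℝ) := by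
  obtain ⟨β, hβ, hb⟩ := chernoff_side Pr X lam hmeas hindep hlaw a b hδ
  set L : ℝ := ∑ p, (a p * lam p + b p)
  set A : ℕ → Set Ω := fun n => {ω | (L + δ) * (g n : ℝ) ≤
    ∑ t ∈ Finset.Ioc (n - g n) n, ∑ p, (a p * (X t ω p : ℝ) + b p)} with hA
  have hbound : ∀ n, (Pr (A n)).toReal ≤ Real.exp (-β) ^ (g n) := by
    intro n
    have := hb (n - g n) n
    rwa [Nat.sub_sub_self (hg_le n)] at this
  have hsum : Summable fun n => Real.exp (-β) ^ (g n) :=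
    summable_bound hβ hc hw g hg_gt
  have htsum : ∑' n, Pr (A n) ≠ ⊤ := by
    have h1 : ∑' n, Pr (A n) ≤ ∑' n, ENNReal.ofReal (Real.exp (-β) ^ (g n)) := by
      refine ENNReal.tsum_le_tsum fun n => ?_
      rw [← ENNReal.ofReal_toReal (measure_ne_top Pr (A n))]
      exact ENNReal.ofReal_le_ofReal (hbound n)
    refine ne_top_of_le_ne_top ?_ h1
    rw [← ENNReal.ofReal_tsum_of_nonneg (fun n => by positivity) hsum]
    exact ENNReal.ofReal_ne_top
  have hbc := ae_eventually_notMem (μ := Pr) htsum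
  filter_upwards [hbc] with ω hω
  filter_upwards [hω] with n hn
  rw [hA] at hn
  simpa using not_le.1 hn

lemma tail_slln {P : Type*} [Fintype P] {Ω : Type*} [MeasurableSpace Ω]
    (Pr : Measure Ω) [IsProbabilityMeasure Pr]
    (X : ℕ → Ω → P → ℕ) (lam : P → ℝ≥0)
    (hmeas : ∀ t p, Measurable fun ω => X t ω p)
    (hindep : iIndepFun (fun (q : ℕ × P) ω => X q.1 ω q.2) Pr)
    (hlaw : ∀ t p, Measure.map (fun ω => X t ω p) Pr = poissonMeasure (lam p))
    (a b : P → ℝ) {wexp c : ℝ} (hw : 0 < wexp) (hc : 0 < c)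
    (g : ℕ → ℕ) (hg_le : ∀ n, g n ≤ n)
    (hg_gt : ∀ᶠ n : ℕ in atTop, c * (n : ℝ) ^ wexp < (g n : ℝ)) :
    ∀ᵐ ω ∂Pr, Tendsto (fun n : ℕ =>
        (1 / (g n : ℝ)) * ∑ t ∈ Finset.Ioc (n - g n) n, ∑ p, (a p * (X t ω p : ℝ) + b p))
      atTop (𝓝 (∑ p, (a p * lam p + b p))) := by
  set L : ℝ := ∑ p, (a p * lam p + b p) with hL
  have hup : ∀ δ : ℝ, 0 < δ → ∀ᵐ ω ∂Pr, ∀ᶠ n : ℕ in atTop,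
      ∑ t ∈ Finset.Ioc (n - g n) n, ∑ p, (a p * (X t ω p : ℝ) + b p)
        < (L + δ) * (g n : ℝ) := fun δ hδ =>
    bc_side Pr X lam hmeas hindep hlaw a b hw hc g hg_le hg_gt hδ
  have hlo : ∀ δ : ℝ, 0 < δ → ∀ᵐ ω ∂Pr, ∀ᶠ n : ℕ in atTop,
      (L - δ) * (g n : ℝ)
        < ∑ t ∈ Finset.Ioc (n - g n) n, ∑ p, (a p * (X t ω p : ℝ) + b p) := by
    intro δ hδ
    have h := bc_side Pr X lam hmeas hindep hlaw (fun p => -a p) (fun p => -b p)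
      hw hc g hg_le hg_gt hδ
    have hnegL : (∑ p, ((-a p) * (lam p : ℝ) + (-b p))) = -L := by
      rw [hL, ← Finset.sum_neg_distrib]
      exact Finset.sum_congr rfl fun p _ => by ring
    filter_upwards [h] with ω hω
    filter_upwards [hω] with n hn
    rw [hnegL] at hn
    have hS : ∑ t ∈ Finset.Ioc (n - g n) n, ∑ p, ((-a p) * (X t ω p : ℝ) + (-b p))
        = -∑ t ∈ Finset.Ioc (n - g n) n, ∑ p, (a p * (X t ω p : ℝ) + b p) := by
      rw [← Finset.sum_neg_distrib]
      refine Finset.sum_congr rfl fun t _ => ?_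
      rw [← Finset.sum_neg_distrib]
      exact Finset.sum_congr rfl fun p _ => by ring
    rw [hS] at hn
    nlinarith [hn]
  have hδae : ∀ k : ℕ, ∀ᵐ ω ∂Pr, ∀ᶠ n : ℕ in atTop,
      (∑ t ∈ Finset.Ioc (n - g n) n, ∑ p, (a p * (X t ω p : ℝ) + b p)
          < (L + 1 / ((k : ℝ) + 1)) * (g n : ℝ)) ∧
      ((L - 1 / ((k : ℝ) + 1)) * (g n : ℝ)
          < ∑ t ∈ Finset.Ioc (n - g n) n, ∑ p, (a p * (X t ω p : ℝ) + b p)) := by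
    intro k
    have hpos : (0 : ℝ) < 1 / ((k : ℝ) + 1) := by positivity
    filter_upwards [hup _ hpos, hlo _ hpos] with ω h1 h2
    exact h1.and h2
  have hall := ae_all_iff.2 hδae
  have hgpos : ∀ᶠ n : ℕ in atTop, 0 < (g n : ℝ) := by
    filter_upwards [hg_gt, eventually_ge_atTop 1] with n h1 h2
    have : (1 : ℝ) ≤ (n : ℝ) := by exact_mod_cast h2
    have : (0 : ℝ) < c * (n : ℝ) ^ wexp := by positivity
    linarith
  filter_upwards [hall] with ω hω
  rw [Metric.tendsto_atTop]
  intro ε hε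
  obtain ⟨k, hk⟩ := exists_nat_one_div_lt hε
  have hev := (hω k).and hgpos
  rw [eventually_atTop] at hev
  obtain ⟨N, hN⟩ := hev
  refine ⟨N, fun n hn => ?_⟩
  obtain ⟨⟨h1, h2⟩, h3⟩ := hN n hn
  rw [Real.dist_eq]
  set S : ℝ := ∑ t ∈ Finset.Ioc (n - g n) n, ∑ p, (a p * (X t ω p : ℝ) + b p) with hSdef
  set Gn : ℝ := (g n : ℝ) with hGn
  have hinv : 0 < 1 / Gn := by positivity
  have hcan : Gn * (1 / Gn) = 1 := mul_one_div_cancel (ne_of_gt h3)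
  have key2 : L - 1 / ((k : ℝ) + 1) < 1 / Gn * S := by
    have h := mul_lt_mul_of_pos_right h2 hinv
    rw [mul_assoc, hcan, mul_one, mul_comm] at h
    exact h
  have key1 : 1 / Gn * S < L + 1 / ((k : ℝ) + 1) := by
    have h := mul_lt_mul_of_pos_right h1 hinv
    rw [mul_assoc, hcan, mul_one, mul_comm] at h
    exact h
  have habs : |1 / Gn * S - L| < 1 / ((k : ℝ) + 1) := by
    rw [abs_lt]
    constructor <;> linarith
  exact habs.trans hk

end Prop3Aux

/-- Proposition 3 (strong law for tail segments): for fixed `μ ∈ Θ(R)` and a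
sequence `g` with `g n ≤ n` and `g n > c·n^w` eventually (`w ∈ (0,1]`, `c > 0`),
the averages of `l((R,μ); X_t)` over the tail segment `t = n−g(n)+1, …, n`
converge almost surely to `L(R,μ)`, and likewise for the gradients in `μ`. -/
theorem prop3_tail_segment_slln
    {NI NW m0 m : ℕ} (Cd Cu : ℝ) (hCd : 0 < Cd) (hCdCu : Cd ≤ Cu)
    (R0 : Fin NI → Fin m0) (hR0surj : ∀ h, ∃ i, R0 i = h)
    (μ0 : Fin m0 × Fin NW → ℝ) (hA1 : ∀ p, μ0 p ∈ Set.Icc Cd Cu)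
    (R : Fin NI → Fin m) (μ : Fin m × Fin NW → ℝ) (hμ : μ ∈ Theta Cd Cu m NW)
    (wexp c : ℝ) (hwexp : 0 < wexp ∧ wexp ≤ 1) (hc : 0 < c)
    (g : ℕ → ℕ) (hg_le : ∀ n, g n ≤ n)
    (hg_gt : ∀ᶠ n : ℕ in atTop, c * (n : ℝ) ^ wexp < (g n : ℝ))
    {Ω : Type*} [MeasurableSpace Ω] (Pr : Measure Ω) [IsProbabilityMeasure Pr]
    (X : ℕ → Ω → Fin NI × Fin NW → ℕ)
    (hmeas : ∀ t p, Measurable fun ω => X t ω p)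
    (hindep : iIndepFun
      (fun (q : ℕ × (Fin NI × Fin NW)) ω => X q.1 ω q.2) Pr)
    (hlaw : ∀ t p, Measure.map (fun ω => X t ω p) Pr
      = poissonMeasure (μ0 (R0 p.1, p.2)).toNNReal) :
    ∀ᵐ ω ∂Pr,
      (Tendsto (fun n : ℕ =>
          (1 / (g n : ℝ)) * ∑ t ∈ Finset.Ioc (n - g n) n, loglik R μ (X t ω))
        atTop (𝓝 (expLoglik R0 μ0 R μ))) ∧
      (Tendsto (fun n : ℕ =>
          (1 / (g n : ℝ)) • ∑ t ∈ Finset.Ioc (n - g n) n, loglikGrad R μ (X t ω))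
        atTop (𝓝 (expLoglikGrad R0 μ0 R μ))) := by
  classical
  set lam : Fin NI × Fin NW → ℝ≥0 := fun p => (μ0 (R0 p.1, p.2)).toNNReal with hlam
  have hlamcoe : ∀ p : Fin NI × Fin NW, (lam p : ℝ) = μ0 (R0 p.1, p.2) := by
    intro p
    exact Real.coe_toNNReal _ (le_trans hCd.le (hA1 _).1)
  -- the log-likelihood coefficients
  set A : Fin NI × Fin NW → ℝ := fun p => Real.log (μ (R p.1, p.2)) with hA
  set B : Fin NI × Fin NW → ℝ := fun p => -μ (R p.1, p.2) with hB
  have hll : ∀ x : Fin NI × Fin NW → ℕ,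
      loglik R μ x = ∑ p : Fin NI × Fin NW, (A p * (x p : ℝ) + B p) := by
    intro x
    rw [loglik, Finset.sum_comm, Fintype.sum_prod_type]
    exact Finset.sum_congr rfl fun i _ => Finset.sum_congr rfl fun w _ => by
      simp only [hA, hB]; ring
  have hllL : expLoglik R0 μ0 R μ = ∑ p : Fin NI × Fin NW, (A p * (lam p : ℝ) + B p) := by
    rw [expLoglik, Finset.sum_comm, Fintype.sum_prod_type]
    exact Finset.sum_congr rfl fun i _ => Finset.sum_congr rfl fun w _ => by
      simp only [hA, hB, hlamcoe]; ring
  -- gradient coefficients per coordinate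
  set AG : (Fin m × Fin NW) → Fin NI × Fin NW → ℝ := fun hw p =>
    if R p.1 = hw.1 ∧ p.2 = hw.2 then (μ hw)⁻¹ else 0 with hAG
  set BG : (Fin m × Fin NW) → Fin NI × Fin NW → ℝ := fun hw p =>
    if R p.1 = hw.1 ∧ p.2 = hw.2 then (-1 : ℝ) else 0 with hBG
  have hgr : ∀ (hw : Fin m × Fin NW) (x : Fin NI × Fin NW → ℕ),
      loglikGrad R μ x hw = ∑ p : Fin NI × Fin NW, (AG hw p * (x p : ℝ) + BG hw p) := by
    intro hw x
    rw [loglikGrad, Fintype.sum_prod_type]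
    refine Finset.sum_congr rfl fun i _ => ?_
    rcases eq_or_ne (R i) hw.1 with h | h
    · simp only [h, if_pos rfl, hAG, hBG, true_and]
      have hterm : ∀ w : Fin NW,
          (if w = hw.2 then (μ hw)⁻¹ else 0) * ((x (i, w) : ℝ))
            + (if w = hw.2 then (-1 : ℝ) else 0)
          = if w = hw.2 then ((x (i, w) : ℝ) / μ hw - 1) else 0 := by
        intro w
        split_ifs with hww
        · rw [div_eq_mul_inv]; ring
        · ring
      rw [Finset.sum_congr rfl (fun w _ => hterm w),
        Finset.sum_ite_eq' Finset.univ hw.2 (fun w => (x (i, w) : ℝ) / μ hw - 1)]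
      simp
    · simp [hAG, hBG, h]
  have hgrL : ∀ hw : Fin m × Fin NW, expLoglikGrad R0 μ0 R μ hw
      = ∑ p : Fin NI × Fin NW, (AG hw p * (lam p : ℝ) + BG hw p) := by
    intro hw
    rw [expLoglikGrad, Fintype.sum_prod_type]
    refine Finset.sum_congr rfl fun i _ => ?_
    rcases eq_or_ne (R i) hw.1 with h | h
    · simp only [h, if_pos rfl, hAG, hBG, true_and]
      have hterm : ∀ w : Fin NW,
          (if w = hw.2 then (μ hw)⁻¹ else 0) * ((lam (i, w) : ℝ))
            + (if w = hw.2 then (-1 : ℝ) else 0)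
          = if w = hw.2 then ((lam (i, w) : ℝ) / μ hw - 1) else 0 := by
        intro w
        split_ifs with hww
        · rw [div_eq_mul_inv]; ring
        · ring
      rw [Finset.sum_congr rfl (fun w _ => hterm w),
        Finset.sum_ite_eq' Finset.univ hw.2 (fun w => (lam (i, w) : ℝ) / μ hw - 1)]
      simp [hlamcoe]
    · simp [hAG, hBG, h]
  -- invoke the SLLN for each coefficient family
  have main1 := tail_slln Pr X lam hmeas hindep
    (fun t p => hlaw t p) A B hwexp.1 hc g hg_le hg_gt
  have main2 : ∀ hw : Fin m × Fin NW, ∀ᵐ ω ∂Pr, Tendsto (fun n : ℕ =>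
      (1 / (g n : ℝ)) * ∑ t ∈ Finset.Ioc (n - g n) n,
        ∑ p, (AG hw p * (X t ω p : ℝ) + BG hw p))
      atTop (𝓝 (∑ p, (AG hw p * (lam p : ℝ) + BG hw p))) := fun hw =>
    tail_slln Pr X lam hmeas hindep (fun t p => hlaw t p) (AG hw) (BG hw)
      hwexp.1 hc g hg_le hg_gt
  have main2' := ae_all_iff.2 main2
  filter_upwards [main1, main2'] with ω h1 h2
  constructor
  · rw [hllL]
    convert h1 using 2 with n
    exact congrArg _ (Finset.sum_congr rfl fun t _ => hll (X t ω))
  · rw [tendsto_pi_nhds]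
    intro hw
    have heq : ∀ n : ℕ, ((1 / (g n : ℝ)) • ∑ t ∈ Finset.Ioc (n - g n) n,
        loglikGrad R μ (X t ω)) hw
        = (1 / (g n : ℝ)) * ∑ t ∈ Finset.Ioc (n - g n) n,
            ∑ p, (AG hw p * (X t ω p : ℝ) + BG hw p) := by
      intro n
      rw [Pi.smul_apply, Finset.sum_apply, smul_eq_mul]
      congr 1
      exact Finset.sum_congr rfl fun t _ => hgr hw (X t ω)
    rw [funext heq] at *
    rw [hgrL hw]
    exact h2 hw
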